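/- arXiv:1904.05142 — 2 statements merged into one kernel-verified Lean document; each statement's English description precedes it below -/
import Mathlib

section
/- If f is a spatially homogeneous steady state of the BGK equation with reservoirs, i.e. f = f(v) is a probability density satisfying 0 = α M_f + (1−α) ρ_f (M_{T₁}+M_{T₂})/2 − f with α ∈ [0,1), then f = α M_{T∞} + (1−α)(M_{T₁}+M_{T₂})/2 where T∞ = (T₁+T₂)/2. -/
open MeasureTheory Real

/-- Centered Maxwellian at temperature `T`. -/
noncomputable def Maxwellian (T v : ℝ) : ℝ :=
  (Real.sqrt (2 * Real.pi * T))⁻¹ * Real.exp (-v ^ 2 / (2 * T))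

lemma int_sq_exp {b : ℝ} (hb : 0 < b) :
    Integrable (fun x : ℝ => x ^ 2 * Real.exp (-b * x ^ 2)) := by
  have := integrable_rpow_mul_exp_neg_mul_sq hb (s := 2) (by norm_num)
  simpa [Real.rpow_natCast] using this

lemma integral_sq_exp {b : ℝ} (hb : 0 < b) :
    ∫ x : ℝ, x ^ 2 * Real.exp (-b * x ^ 2) = Real.sqrt (Real.pi / b) / (2 * b) := by
  have hderiv : ∀ x : ℝ, HasDerivAt (fun x : ℝ => x * Real.exp (-b * x ^ 2))
      (Real.exp (-b * x ^ 2) - 2 * b * (x ^ 2 * Real.exp (-b * x ^ 2))) x := by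
    intro x
    have h1 : HasDerivAt (fun x : ℝ => -b * x ^ 2) (-b * (2 * x)) x := by
      simpa using (hasDerivAt_pow 2 x).const_mul (-b)
    have h2 : HasDerivAt (fun x : ℝ => x * Real.exp (-b * x ^ 2))
        (1 * Real.exp (-b * x ^ 2) + x * (Real.exp (-b * x ^ 2) * (-b * (2 * x)))) x :=
      (hasDerivAt_id' x).mul h1.exp
    convert h2 using 1
    ring
  have hint : Integrable (fun x : ℝ =>
      Real.exp (-b * x ^ 2) - 2 * b * (x ^ 2 * Real.exp (-b * x ^ 2))) :=
    (integrable_exp_neg_mul_sq hb).sub ((int_sq_exp hb).const_mul _)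
  have hzero := integral_eq_zero_of_hasDerivAt_of_integrable hderiv hint
    (integrable_mul_exp_neg_mul_sq hb)
  rw [integral_sub (integrable_exp_neg_mul_sq hb) ((int_sq_exp hb).const_mul _),
    integral_const_mul, integral_gaussian] at hzero
  have h2b : (2 * b) ≠ 0 := by positivity
  field_simp at hzero ⊢
  linarith

lemma maxwellian_eq {T : ℝ} (hT : 0 < T) (v : ℝ) :
    Maxwellian T v = (Real.sqrt (2 * Real.pi * T))⁻¹ * Real.exp (-(1/(2*T)) * v ^ 2) := by
  rw [Maxwellian]
  congr 1
  congr 1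
  field_simp

lemma maxwellian_moment_integrable {T : ℝ} (hT : 0 < T) :
    Integrable (fun v : ℝ => v ^ 2 * Maxwellian T v) := by
  have hb : 0 < 1/(2*T) := by positivity
  apply ((int_sq_exp hb).const_mul (Real.sqrt (2 * Real.pi * T))⁻¹).congr
  filter_upwards with v
  rw [maxwellian_eq hT]
  ring

lemma maxwellian_moment {T : ℝ} (hT : 0 < T) :
    ∫ v : ℝ, v ^ 2 * Maxwellian T v = T := by
  have hb : 0 < 1/(2*T) := by positivity
  have h1 : ∀ v : ℝ, v ^ 2 * Maxwellian T v
      = (Real.sqrt (2 * Real.pi * T))⁻¹ * (v ^ 2 * Real.exp (-(1/(2*T)) * v ^ 2)) := by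
    intro v; rw [maxwellian_eq hT]; ring
  simp only [h1]
  rw [integral_const_mul, integral_sq_exp hb]
  have h2 : Real.pi / (1/(2*T)) = 2 * Real.pi * T := by field_simp
  have h3 : Real.sqrt (2 * Real.pi * T) ≠ 0 := by
    positivity
  rw [h2]
  field_simp
lemma maxwellian_nonpos {T : ℝ} (hT : T ≤ 0) (v : ℝ) : Maxwellian T v = 0 := by
  have : Real.sqrt (2 * Real.pi * T) = 0 := by
    apply Real.sqrt_eq_zero'.2
    nlinarith [Real.pi_pos]
  simp [Maxwellian, this]

theorem homogeneous_steady_state_unique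
    (T₁ T₂ α : ℝ) (hT₁ : 0 < T₁) (hT₂ : 0 < T₂)
    (hα : α ∈ Set.Ico (0:ℝ) 1)
    (f : ℝ → ℝ)
    (hf_nonneg : ∀ v, 0 ≤ f v)
    (hf_prob : ∫ v, f v = 1)
    (hf_mom : Integrable (fun v => v ^ 2 * f v))
    -- the steady state equation `0 = α M_f + (1-α) ρ_f (M_{T₁}+M_{T₂})/2 - f`,
    -- where `ρ_f = 1` and `T_f = ∫ v² f`
    (h_eq : ∀ v, 0 = α * Maxwellian (∫ w, w ^ 2 * f w) v
        + (1 - α) * ((Maxwellian T₁ v + Maxwellian T₂ v) / 2) - f v) :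
    ∀ v, f v = α * Maxwellian ((T₁ + T₂) / 2) v
        + (1 - α) * ((Maxwellian T₁ v + Maxwellian T₂ v) / 2) := by
  obtain ⟨hα0, hα1⟩ := hα
  set S := ∫ w, w ^ 2 * f w with hSdef
  have hfv : ∀ v, f v = α * Maxwellian S v
      + (1 - α) * ((Maxwellian T₁ v + Maxwellian T₂ v) / 2) := fun v => by
    have := h_eq v; linarith
  -- second moment of Maxwellian S (in both cases)
  have hMSint : Integrable (fun v : ℝ => v ^ 2 * Maxwellian S v) := by
    rcases lt_or_ge 0 S with h | h
    · exact maxwellian_moment_integrable h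
    · have : (fun v : ℝ => v ^ 2 * Maxwellian S v) = fun _ => 0 := by
        funext v; rw [maxwellian_nonpos h]; ring
      rw [this]; exact integrable_zero _ _ _
  have hMS : ∫ v : ℝ, v ^ 2 * Maxwellian S v = if 0 < S then S else 0 := by
    rcases lt_or_ge 0 S with h | h
    · rw [if_pos h]; exact maxwellian_moment h
    · rw [if_neg (not_lt.2 h)]
      have : (fun v : ℝ => v ^ 2 * Maxwellian S v) = fun _ => 0 := by
        funext v; rw [maxwellian_nonpos h]; ring
      rw [this]; exact integral_zero _ _
  have hSeq : S = α * (∫ v : ℝ, v ^ 2 * Maxwellian S v)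
      + (1 - α) * ((T₁ + T₂) / 2) := by
    have hptw : (fun v : ℝ => v ^ 2 * f v)
        = fun v => α * (v ^ 2 * Maxwellian S v)
          + (((1 - α) / 2) * (v ^ 2 * Maxwellian T₁ v)
             + ((1 - α) / 2) * (v ^ 2 * Maxwellian T₂ v)) := by
      funext v; rw [hfv v]; ring
    have hi1 := hMSint.const_mul α
    have hi2 := (maxwellian_moment_integrable hT₁).const_mul ((1 - α) / 2)
    have hi3 := (maxwellian_moment_integrable hT₂).const_mul ((1 - α) / 2)
    calc S = ∫ v, v ^ 2 * f v := hSdef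
    _ = ∫ v : ℝ, (α * (v ^ 2 * Maxwellian S v)
          + (((1 - α) / 2) * (v ^ 2 * Maxwellian T₁ v)
             + ((1 - α) / 2) * (v ^ 2 * Maxwellian T₂ v))) := by rw [← hptw]
    _ = α * (∫ v : ℝ, v ^ 2 * Maxwellian S v) + (1 - α) * ((T₁ + T₂) / 2) := by
        have hi23 : Integrable (fun x : ℝ => (1 - α) / 2 * (x ^ 2 * Maxwellian T₁ x)
            + (1 - α) / 2 * (x ^ 2 * Maxwellian T₂ x)) := hi2.add hi3
        rw [integral_add hi1 hi23, integral_add hi2 hi3,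
          integral_const_mul, integral_const_mul, integral_const_mul,
          maxwellian_moment hT₁, maxwellian_moment hT₂]
        ring
  have hkey : S = (T₁ + T₂) / 2 := by
    rcases lt_or_ge 0 S with h | h
    · rw [hMS, if_pos h] at hSeq
      have h1 : (1 - α) * S = (1 - α) * ((T₁ + T₂) / 2) := by linarith
      have h2 : (0:ℝ) < 1 - α := by linarith
      exact mul_left_cancel₀ (ne_of_gt h2) h1
    · rw [hMS, if_neg (not_lt.2 h)] at hSeq
      nlinarith
  intro v
  rw [hfv v, hkey]
end

section
/- Abstract hypocoercivity auxiliary bounds: let H be a Hilbert space, Π₀ an orthogonal projection, S a closed skew-adjoint operator with Π₀SΠ₀ = 0, and A = (1 + (SΠ₀)*(SΠ₀))^{−1}(SΠ₀)*. Then for all h in the domain, ‖Ah‖ ≤ (1/2)‖(1−Π₀)h‖ and ‖SAh‖ ≤ ‖(1−Π₀)h‖. -/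
open ContinuousLinearMap

theorem hypocoercivity_auxiliary_operator_bounds
    {H : Type*} [NormedAddCommGroup H] [InnerProductSpace ℝ H] [CompleteSpace H]
    (S P0 A : H →L[ℝ] H)
    -- `P0` is an orthogonal projection
    (hP_idem : P0.comp P0 = P0)
    (hP_sa : ContinuousLinearMap.adjoint P0 = P0)
    -- `S` is skew-adjoint
    (hS_skew : ContinuousLinearMap.adjoint S = -S)
    -- consistency: `P0 S P0 = 0`
    (hcons : P0.comp (S.comp P0) = 0)
    -- `A = (1 + (SP0)*(SP0))⁻¹ (SP0)*`, expressed by its defining relations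
    (hA_range : P0.comp A = A)
    (hA_def : ((ContinuousLinearMap.id ℝ H) +
        (ContinuousLinearMap.adjoint (S.comp P0)).comp (S.comp P0)).comp A
      = ContinuousLinearMap.adjoint (S.comp P0)) :
    ∀ h : H, ‖A h‖ ≤ (1 / 2) * ‖h - P0 h‖ ∧ ‖S (A h)‖ ≤ ‖h - P0 h‖ := by
  intro h
  have hPA : P0 (A h) = A h := by
    have := congrFun (congrArg DFunLike.coe hA_range) h
    simpa using this
  have hPS : P0 (S (A h)) = 0 := by
    have := congrFun (congrArg DFunLike.coe hcons) (A h)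
    simp only [comp_apply, zero_apply, hPA] at this
    exact this
  have hdef := congrFun (congrArg DFunLike.coe hA_def) h
  simp only [comp_apply, add_apply, id_apply] at hdef
  have hTA : S (P0 (A h)) = S (A h) := by rw [hPA]
  have h1 : (inner ℝ (A h) (A h + adjoint (S.comp P0) (S (P0 (A h)))) : ℝ)
      = inner ℝ (A h) (adjoint (S.comp P0) h) := by rw [hdef]
  rw [inner_add_right, adjoint_inner_right, adjoint_inner_right] at h1
  simp only [comp_apply, hPA] at h1
  have h2 : (inner ℝ (S (A h)) (P0 h) : ℝ) = 0 := by
    rw [← adjoint_inner_left, hP_sa, hPS, inner_zero_left]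
  have key : ‖A h‖ ^ 2 + ‖S (A h)‖ ^ 2 = inner ℝ (S (A h)) (h - P0 h) := by
    rw [inner_sub_right, h2, sub_zero, ← h1,
      real_inner_self_eq_norm_sq, real_inner_self_eq_norm_sq]
  have hcs : (inner ℝ (S (A h)) (h - P0 h) : ℝ) ≤ ‖S (A h)‖ * ‖h - P0 h‖ :=
    real_inner_le_norm _ _
  have hk : ‖A h‖ ^ 2 + ‖S (A h)‖ ^ 2 ≤ ‖S (A h)‖ * ‖h - P0 h‖ := key ▸ hcs
  have hn1 : (0:ℝ) ≤ ‖A h‖ := norm_nonneg _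
  have hn2 : (0:ℝ) ≤ ‖S (A h)‖ := norm_nonneg _
  have hn3 : (0:ℝ) ≤ ‖h - P0 h‖ := norm_nonneg _
  constructor
  · nlinarith [sq_nonneg (‖S (A h)‖ - (1/2) * ‖h - P0 h‖), sq_nonneg (‖A h‖ - (1/2) * ‖h - P0 h‖)]
  · nlinarith [sq_nonneg (‖S (A h)‖ - ‖h - P0 h‖), sq_nonneg (‖A h‖)]
end
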